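/- (Scalar Burkholder-type inequality.) Let p ∈ (1,2] and let X_0, …, X_{T−1} be real-valued random variables adapted to a filtration such that E[X_k | X_0,…,X_{k−1}] = 0 and E[|X_k|^p] < ∞ for each k. Then E[|∑_{k=0}^{T−1} X_k|^p] ≤ 2^{2−p} · ∑_{k=0}^{T−1} E[|X_k|^p]. -/

import Mathlib

open MeasureTheory
open scoped ENNReal NNReal


/-- sign-power helper rewriting. -/
lemma vb_sp_of_nonneg {q : ℝ} (hq : 0 < q) {s : ℝ} (hs : 0 ≤ s) :
    Real.sign s * |s| ^ q = s ^ q := by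
  rcases hs.eq_or_lt with rfl | hs'
  · simp [Real.sign_zero, Real.zero_rpow hq.ne']
  · rw [Real.sign_of_pos hs', abs_of_pos hs', one_mul]

lemma vb_sp_of_nonpos {q : ℝ} (hq : 0 < q) {s : ℝ} (hs : s ≤ 0) :
    Real.sign s * |s| ^ q = -((-s) ^ q) := by
  rcases hs.eq_or_lt with rfl | hs'
  · simp [Real.sign_zero, Real.zero_rpow hq.ne']
  · rw [Real.sign_of_neg hs', abs_of_neg hs', neg_one_mul]

lemma vb_sp_eq {q : ℝ} (hq : 0 < q) (t : ℝ) :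
    Real.sign t * |t| ^ q = t * |t| ^ (q - 1) := by
  rcases eq_or_ne t 0 with rfl | ht
  · simp [Real.sign_zero]
  · have h0 : (0:ℝ) < |t| := abs_pos.mpr ht
    have : |t| ^ q = |t| * |t| ^ (q - 1) := by
      rw [← Real.rpow_one_add' h0.le (by linarith : 1 + (q-1) ≠ 0)]
      ring_nf
    rw [this, ← mul_assoc]
    rcases lt_or_gt_of_ne ht with h | h
    · rw [Real.sign_of_neg h, abs_of_neg h]; ring
    · rw [Real.sign_of_pos h, abs_of_pos h]; ring

/-- real version of subadditivity of x ↦ x^q for 0 ≤ q ≤ 1 -/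
lemma vb_rpow_subadd {q : ℝ} (hq0 : 0 ≤ q) (hq1 : q ≤ 1) {x y : ℝ}
    (hx : 0 ≤ x) (hy : 0 ≤ y) : (x + y) ^ q ≤ x ^ q + y ^ q := by
  have h := NNReal.rpow_add_le_add_rpow x.toNNReal y.toNNReal hq0 hq1
  have := NNReal.coe_le_coe.mpr h
  push_cast [NNReal.coe_rpow] at this
  rwa [Real.coe_toNNReal x hx, Real.coe_toNNReal y hy] at this

lemma vb_concave_nn {q : ℝ} (hq0 : 0 < q) (hq1 : q ≤ 1) (x y : ℝ≥0) :
    x ^ q + y ^ q ≤ 2 ^ (1 - q) * (x + y) ^ q := by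
  have hp : (1:ℝ) ≤ 1/q := by rw [le_div_iff₀ hq0]; linarith
  have h := NNReal.rpow_arith_mean_le_arith_mean2_rpow (1/2) (1/2) (x ^ q) (y ^ q)
    (by rw [← two_mul]; norm_num) hp
  have hxq : (x ^ q) ^ (1/q) = x := by
    rw [← NNReal.rpow_mul, mul_one_div, div_self hq0.ne', NNReal.rpow_one]
  have hyq : (y ^ q) ^ (1/q) = y := by
    rw [← NNReal.rpow_mul, mul_one_div, div_self hq0.ne', NNReal.rpow_one]
  rw [hxq, hyq] at h
  have h2 := NNReal.rpow_le_rpow h hq0.le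
  rw [← NNReal.rpow_mul, one_div_mul_cancel hq0.ne', NNReal.rpow_one] at h2
  have h3 : ((2:ℝ≥0)⁻¹ * x + 2⁻¹ * y) ^ q = (2:ℝ≥0)⁻¹ ^ q * (x + y) ^ q := by
    rw [← NNReal.mul_rpow, mul_add]
  simp only [one_div] at h2
  rw [h3] at h2
  have h4 : x ^ q + y ^ q = 2 * (2⁻¹ * x ^ q + 2⁻¹ * y ^ q) := by
    rw [mul_add, ← mul_assoc, ← mul_assoc, mul_inv_cancel₀ two_ne_zero, one_mul, one_mul]
  rw [h4]
  calc 2 * ((2:ℝ≥0)⁻¹ * x ^ q + 2⁻¹ * y ^ q) ≤ 2 * ((2:ℝ≥0)⁻¹ ^ q * (x + y) ^ q) :=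
        mul_le_mul_right h2 2
    _ = 2 ^ (1 - q) * (x + y) ^ q := by
        rw [← mul_assoc]
        congr 1
        have h5 : ((2:ℝ≥0))⁻¹ ^ q = 2 ^ (-q) := by
          rw [← NNReal.rpow_neg_one 2, ← NNReal.rpow_mul]
          ring_nf
        rw [h5, NNReal.rpow_sub two_ne_zero, NNReal.rpow_one, NNReal.rpow_neg,
          div_eq_mul_inv]

lemma vb_concave {q : ℝ} (hq0 : 0 < q) (hq1 : q ≤ 1) {x y : ℝ}
    (hx : 0 ≤ x) (hy : 0 ≤ y) : x ^ q + y ^ q ≤ 2 ^ (1 - q) * (x + y) ^ q := by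
  have h := vb_concave_nn hq0 hq1 x.toNNReal y.toNNReal
  have := NNReal.coe_le_coe.mpr h
  push_cast [NNReal.coe_rpow] at this
  rwa [Real.coe_toNNReal x hx, Real.coe_toNNReal y hy] at this

lemma vb_one_le : ∀ {q : ℝ}, q ≤ 1 → (1:ℝ) ≤ 2 ^ (1 - q) := fun {q} hq => by
  rw [show (1:ℝ) = 2 ^ (0:ℝ) by simp]
  exact Real.rpow_le_rpow_of_exponent_le one_le_two (by linarith)

/-- monotone + Hölder estimate, ordered version -/
lemma vb_sp_diff_bound {q : ℝ} (hq0 : 0 < q) (hq1 : q ≤ 1) {s t : ℝ} (hst : t ≤ s) :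
    Real.sign s * |s| ^ q - Real.sign t * |t| ^ q ∈
      Set.Icc 0 (2 ^ (1 - q) * (s - t) ^ q) := by
  have hst' : (0:ℝ) ≤ s - t := by linarith
  constructor
  · -- nonneg
    by_cases h1 : 0 ≤ t
    · rw [vb_sp_of_nonneg hq0 h1, vb_sp_of_nonneg hq0 (le_trans h1 hst), sub_nonneg]
      exact Real.rpow_le_rpow h1 hst hq0.le
    · push_neg at h1
      by_cases h2 : s ≤ 0
      · rw [vb_sp_of_nonpos hq0 h2, vb_sp_of_nonpos hq0 h1.le]
        have : (-s) ^ q ≤ (-t) ^ q := Real.rpow_le_rpow (by linarith) (by linarith) hq0.le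
        linarith
      · push_neg at h2
        rw [vb_sp_of_nonneg hq0 h2.le, vb_sp_of_nonpos hq0 h1.le]
        have h3 : (0:ℝ) ≤ s ^ q := Real.rpow_nonneg h2.le q
        have h4 : (0:ℝ) ≤ (-t) ^ q := Real.rpow_nonneg (by linarith) q
        linarith
  · by_cases h1 : 0 ≤ t
    · rw [vb_sp_of_nonneg hq0 h1, vb_sp_of_nonneg hq0 (le_trans h1 hst)]
      have h2 : s ^ q ≤ t ^ q + (s - t) ^ q := by
        have := vb_rpow_subadd hq0.le hq1 h1 hst'
        rwa [add_sub_cancel] at this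
      have := vb_one_le hq1
      have h5 : (0:ℝ) ≤ (s - t) ^ q := Real.rpow_nonneg hst' q
      nlinarith
    · push_neg at h1
      by_cases h2 : s ≤ 0
      · rw [vb_sp_of_nonpos hq0 h2, vb_sp_of_nonpos hq0 h1.le]
        have h3 : (-t) ^ q ≤ (-s) ^ q + (s - t) ^ q := by
          have := vb_rpow_subadd hq0.le hq1 (neg_nonneg.mpr h2) hst'
          rw [show -s + (s - t) = -t by ring] at this
          exact this
        have := vb_one_le hq1
        have h5 : (0:ℝ) ≤ (s - t) ^ q := Real.rpow_nonneg hst' q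
        nlinarith
      · push_neg at h2
        rw [vb_sp_of_nonneg hq0 h2.le, vb_sp_of_nonpos hq0 h1.le]
        have h3 := vb_concave hq0 hq1 h2.le (neg_nonneg.mpr h1.le)
        rw [show s + -t = s - t by ring] at h3
        linarith

/-- Hölder continuity of the sign power function -/
lemma vb_sp_holder {q : ℝ} (hq0 : 0 < q) (hq1 : q ≤ 1) (s t : ℝ) :
    |Real.sign s * |s| ^ q - Real.sign t * |t| ^ q| ≤ 2 ^ (1 - q) * |s - t| ^ q := by
  rcases le_total t s with h | h
  · have := vb_sp_diff_bound hq0 hq1 h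
    rw [abs_of_nonneg this.1, abs_of_nonneg (by linarith : (0:ℝ) ≤ s - t)]
    exact this.2
  · have := vb_sp_diff_bound hq0 hq1 h
    rw [abs_sub_comm, abs_of_nonneg this.1, abs_sub_comm s t,
      abs_of_nonneg (by linarith : (0:ℝ) ≤ t - s)]
    exact this.2

/-- derivative of |x|^p -/
lemma vb_hasDerivAt {p : ℝ} (hp : 1 < p) (x : ℝ) :
    HasDerivAt (fun t : ℝ => |t| ^ p) (p * (Real.sign x * |x| ^ (p - 1))) x := by
  rcases lt_trichotomy x 0 with hx | rfl | hx
  · have h1 : HasDerivAt (fun t : ℝ => (-t) ^ p) (p * (-x) ^ (p - 1) * (-1)) x :=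
      (Real.hasDerivAt_rpow_const (p := p) (Or.inl (by linarith))).comp x (hasDerivAt_neg x)
    have h2 : (fun t : ℝ => |t| ^ p) =ᶠ[nhds x] fun t : ℝ => (-t) ^ p := by
      filter_upwards [Iio_mem_nhds hx] with t ht
      rw [abs_of_neg ht]
    have := h1.congr_of_eventuallyEq h2
    refine this.congr_deriv ?_
    rw [Real.sign_of_neg hx, abs_of_neg hx]; ring
  · -- derivative 0 at 0
    rw [Real.sign_zero]
    simp only [mul_zero, zero_mul]
    rw [hasDerivAt_iff_isLittleO]
    simp only [abs_zero, Real.zero_rpow (by positivity : p ≠ 0), sub_zero, smul_zero, sub_zero]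
    rw [Asymptotics.isLittleO_iff]
    intro c hc
    have hp1 : 0 < p - 1 := by linarith
    have hδ : 0 < c ^ (1 / (p-1)) := Real.rpow_pos_of_pos hc _
    filter_upwards [Metric.ball_mem_nhds 0 hδ] with t ht
    rw [Metric.mem_ball, Real.dist_eq, sub_zero] at ht
    rcases eq_or_ne t 0 with rfl | ht0
    · simp [Real.zero_rpow (by positivity : p ≠ 0)]
    · have habs : (0:ℝ) < |t| := abs_pos.mpr ht0
      have h1 : |t| ^ p = |t| ^ (p - 1) * |t| := by
        nth_rewrite 3 [← Real.rpow_one |t|]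
        rw [← Real.rpow_add habs]; ring_nf
      have h2 : |t| ^ (p - 1) ≤ c := by
        calc |t| ^ (p - 1) ≤ (c ^ (1 / (p-1))) ^ (p - 1) :=
              Real.rpow_le_rpow habs.le ht.le hp1.le
          _ = c := by
              rw [← Real.rpow_mul hc.le, one_div_mul_cancel hp1.ne', Real.rpow_one]
      have h3 : ‖|t| ^ p‖ = |t| ^ p := Real.norm_of_nonneg (Real.rpow_nonneg habs.le p)
      rw [h3, h1, Real.norm_eq_abs]
      exact mul_le_mul_of_nonneg_right h2 habs.le
  · have h1 : HasDerivAt (fun t : ℝ => t ^ p) (p * x ^ (p - 1)) x :=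
      Real.hasDerivAt_rpow_const (p := p) (Or.inl hx.ne')
    have h2 : (fun t : ℝ => |t| ^ p) =ᶠ[nhds x] fun t : ℝ => t ^ p := by
      filter_upwards [Ioi_mem_nhds hx] with t ht
      rw [abs_of_pos ht]
    have := h1.congr_of_eventuallyEq h2
    refine this.congr_deriv ?_
    rw [Real.sign_of_pos hx, abs_of_pos hx]; ring

lemma vb_abs_rpow_succ {p : ℝ} (hp : 1 < p) (b : ℝ) : |b| ^ (p-1) * |b| = |b| ^ p := by
  rcases eq_or_ne b 0 with rfl | hb
  · simp [Real.zero_rpow (by linarith : p - 1 ≠ 0), Real.zero_rpow (by positivity : p ≠ 0)]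
  · nth_rewrite 2 [← Real.rpow_one |b|]
    rw [← Real.rpow_add (abs_pos.mpr hb)]; ring_nf

/-- the key pointwise inequality -/
lemma vb_pointwise {p : ℝ} (hp1 : 1 < p) (hp2 : p ≤ 2) (a b : ℝ) :
    |a + b| ^ p ≤ |a| ^ p + p * (Real.sign a * |a| ^ (p-1)) * b + 2 ^ (2 - p) * |b| ^ p := by
  have hq0 : 0 < p - 1 := by linarith
  have hp0 : (0:ℝ) < p := by linarith
  set F' : ℝ → ℝ := fun t => p * (Real.sign (a + t*b) * |a + t*b| ^ (p-1)) * b with hF'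
  have hderiv : ∀ t ∈ Set.uIcc (0:ℝ) 1, HasDerivAt (fun t : ℝ => |a + t*b| ^ p) (F' t) t := by
    intro t _
    have hu : HasDerivAt (fun t : ℝ => a + t * b) b t := by
      simpa using ((hasDerivAt_id t).mul_const b).const_add a
    have := (vb_hasDerivAt hp1 (a + t*b)).comp t hu
    simpa [hF', mul_comm, Function.comp_def] using this
  have hmeasF' : Measurable F' := by
    have heq : F' = fun t => p * ((a + t*b) * |a + t*b| ^ (p-1-1)) * b := by
      funext t
      show p * (Real.sign (a + t*b) * |a + t*b| ^ (p-1)) * b = _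
      rw [vb_sp_eq hq0]
    rw [heq]
    exact ((measurable_const.mul (((measurable_const.add (measurable_id.mul_const b)).mul
      ((measurable_const.add (measurable_id.mul_const b)).abs.pow_const _)))).mul_const b)
  have hintF' : IntervalIntegrable F' MeasureTheory.volume 0 1 := by
    rw [intervalIntegrable_iff]
    apply MeasureTheory.Measure.integrableOn_of_bounded (M := p * (|a| + |b|) ^ (p-1) * |b|)
      (by simp) hmeasF'.aestronglyMeasurable
    apply MeasureTheory.ae_restrict_of_forall_mem measurableSet_uIoc
    intro t ht
    rw [Set.uIoc_of_le zero_le_one, Set.mem_Ioc] at ht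
    have h1 : |a + t*b| ≤ |a| + |b| := by
      calc |a + t*b| ≤ |a| + |t*b| := abs_add_le _ _
        _ ≤ |a| + |b| := by
            rw [abs_mul]
            have : |t| ≤ 1 := by rw [abs_of_pos ht.1]; exact ht.2
            nlinarith [abs_nonneg b]
    have h2 : |a + t*b| ^ (p-1) ≤ (|a| + |b|) ^ (p-1) :=
      Real.rpow_le_rpow (abs_nonneg _) h1 hq0.le
    have hsign : |Real.sign (a + t*b)| ≤ 1 := by
      rcases Real.sign_apply_eq (a + t*b) with h | h | h <;> rw [h] <;> norm_num
    show ‖p * (Real.sign (a + t*b) * |a + t*b| ^ (p-1)) * b‖ ≤ _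
    rw [Real.norm_eq_abs, abs_mul, abs_mul, abs_mul, abs_of_pos hp0,
      abs_of_nonneg (Real.rpow_nonneg (abs_nonneg _) _)]
    have h3 : (0:ℝ) ≤ |a + t*b| ^ (p-1) := Real.rpow_nonneg (abs_nonneg _) _
    have h4 : |Real.sign (a+t*b)| * |a + t*b| ^ (p-1) ≤ (|a| + |b|) ^ (p-1) := by
      have := mul_le_mul hsign h2 h3 zero_le_one
      simpa using this
    exact mul_le_mul_of_nonneg_right (mul_le_mul_of_nonneg_left h4 hp0.le) (abs_nonneg b)
  -- fundamental theorem of calculus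
  have hftc := intervalIntegral.integral_eq_sub_of_hasDerivAt hderiv hintF'
  simp only [one_mul, zero_mul, add_zero] at hftc
  -- hftc : ∫ t in 0..1, F' t = |a + b| ^ p - |a| ^ p
  set c : ℝ := p * (Real.sign a * |a| ^ (p-1)) * b with hc
  have hconst : (∫ _ in (0:ℝ)..1, c) = c := by simp
  have hdiff : |a + b| ^ p - |a| ^ p - c = ∫ t in (0:ℝ)..1, (F' t - c) := by
    rw [intervalIntegral.integral_sub hintF' (intervalIntegrable_const), hftc, hconst]
  -- bound the integrand
  set C : ℝ := p * 2 ^ (2-p) * |b| ^ p with hC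
  have hC0 : 0 ≤ C := by positivity
  have hbound : ∀ᵐ t ∂(MeasureTheory.volume.restrict (Set.uIoc (0:ℝ) 1)),
      ‖F' t - c‖ ≤ C * t ^ (p-1) := by
    apply MeasureTheory.ae_restrict_of_forall_mem measurableSet_uIoc
    intro t ht
    rw [Set.uIoc_of_le zero_le_one, Set.mem_Ioc] at ht
    have key := vb_sp_holder hq0 (by linarith : p - 1 ≤ 1) (a + t*b) a
    have hsub : a + t*b - a = t*b := by ring
    rw [hsub] at key
    have habs_tb : |t*b| ^ (p-1) = t ^ (p-1) * |b| ^ (p-1) := by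
      rw [abs_mul, abs_of_pos ht.1, Real.mul_rpow ht.1.le (abs_nonneg b)]
    rw [habs_tb] at key
    have hFc : F' t - c = p * ((Real.sign (a + t*b) * |a + t*b| ^ (p-1))
        - (Real.sign a * |a| ^ (p-1))) * b := by rw [hF', hc]; ring
    rw [hFc, Real.norm_eq_abs, abs_mul, abs_mul, abs_of_pos hp0]
    calc p * |Real.sign (a + t*b) * |a + t*b| ^ (p-1) - Real.sign a * |a| ^ (p-1)| * |b|
        ≤ p * (2 ^ (1 - (p-1)) * (t ^ (p-1) * |b| ^ (p-1))) * |b| := by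
          exact mul_le_mul_of_nonneg_right (mul_le_mul_of_nonneg_left key hp0.le) (abs_nonneg b)
      _ = C * t ^ (p-1) := by
          rw [hC, show (1 : ℝ) - (p-1) = 2 - p by ring, ← vb_abs_rpow_succ hp1 b]; ring
  have hint_bound : IntervalIntegrable (fun t => C * t ^ (p-1)) MeasureTheory.volume 0 1 :=
    (intervalIntegral.intervalIntegrable_rpow (Or.inl hq0.le)).const_mul C
  have hnorm := intervalIntegral.norm_integral_le_abs_of_norm_le hbound hint_bound
  have hval : (∫ t in (0:ℝ)..1, C * t ^ (p-1)) = C / p := by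
    rw [intervalIntegral.integral_const_mul, integral_rpow (Or.inl (by linarith : (-1:ℝ) < p - 1))]
    rw [show p - 1 + 1 = p by ring, Real.one_rpow, Real.zero_rpow hp0.ne']
    ring
  rw [hval] at hnorm
  have hCp : C / p = 2 ^ (2-p) * |b| ^ p := by rw [hC]; field_simp
  rw [hCp, abs_of_nonneg (by positivity : (0:ℝ) ≤ 2 ^ (2-p) * |b| ^ p)] at hnorm
  rw [← hdiff, Real.norm_eq_abs] at hnorm
  have := abs_le.mp hnorm
  linarith [this.2]

lemma vb_young {p : ℝ} (hp1 : 1 < p) (u v : ℝ) : |u| ^ (p-1) * |v| ≤ |u| ^ p + |v| ^ p := by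
  have h1 : (0:ℝ) ≤ |u| ^ p := Real.rpow_nonneg (abs_nonneg u) p
  have h2 : (0:ℝ) ≤ |v| ^ p := Real.rpow_nonneg (abs_nonneg v) p
  rcases le_total |v| |u| with h | h
  · have : |u| ^ (p-1) * |v| ≤ |u| ^ (p-1) * |u| :=
      mul_le_mul_of_nonneg_left h (Real.rpow_nonneg (abs_nonneg u) _)
    rw [vb_abs_rpow_succ hp1] at this; linarith
  · have h3 : |u| ^ (p-1) ≤ |v| ^ (p-1) :=
      Real.rpow_le_rpow (abs_nonneg u) h (by linarith)
    have : |u| ^ (p-1) * |v| ≤ |v| ^ (p-1) * |v| :=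
      mul_le_mul_of_nonneg_right h3 (abs_nonneg v)
    rw [vb_abs_rpow_succ hp1] at this; linarith

lemma vb_abs_le {p : ℝ} (hp1 : 1 < p) (v : ℝ) : |v| ≤ 1 + |v| ^ p := by
  rcases le_total |v| 1 with h | h
  · have : (0:ℝ) ≤ |v| ^ p := Real.rpow_nonneg (abs_nonneg v) p
    linarith
  · calc |v| = |v| ^ (1:ℝ) := (Real.rpow_one _).symm
      _ ≤ |v| ^ p := Real.rpow_le_rpow_of_exponent_le h (by linarith)
      _ ≤ 1 + |v| ^ p := by linarith

lemma vb_crude {p : ℝ} (hp1 : 1 < p) (u v : ℝ) :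
    |u + v| ^ p ≤ 2 ^ p * (|u| ^ p + |v| ^ p) := by
  have hp0 : (0:ℝ) < p := by linarith
  have h1 : (0:ℝ) ≤ |u| ^ p := Real.rpow_nonneg (abs_nonneg u) p
  have h2 : (0:ℝ) ≤ |v| ^ p := Real.rpow_nonneg (abs_nonneg v) p
  have h2p : (0:ℝ) ≤ (2:ℝ) ^ p := Real.rpow_nonneg (by norm_num) p
  rcases le_total |u| |v| with h | h
  · calc |u + v| ^ p ≤ (2 * |v|) ^ p := by
          apply Real.rpow_le_rpow (abs_nonneg _) _ hp0.le
          calc |u + v| ≤ |u| + |v| := abs_add_le _ _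
            _ ≤ 2 * |v| := by linarith
      _ = 2 ^ p * |v| ^ p := Real.mul_rpow (by norm_num) (abs_nonneg v)
      _ ≤ 2 ^ p * (|u| ^ p + |v| ^ p) := by nlinarith
  · calc |u + v| ^ p ≤ (2 * |u|) ^ p := by
          apply Real.rpow_le_rpow (abs_nonneg _) _ hp0.le
          calc |u + v| ≤ |u| + |v| := abs_add_le _ _
            _ ≤ 2 * |u| := by linarith
      _ = 2 ^ p * |u| ^ p := Real.mul_rpow (by norm_num) (abs_nonneg u)
      _ ≤ 2 ^ p * (|u| ^ p + |v| ^ p) := by nlinarith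

/-- main induction, real-integral form -/
def vbG {Ω : Type*} (X : ℕ → Ω → ℝ) (k : ℕ) : MeasurableSpace Ω :=
  ⨆ i ∈ Finset.range k, MeasurableSpace.comap (X i) inferInstance

lemma vb_main {Ω : Type*} [m0 : MeasurableSpace Ω] (μ : Measure Ω) [IsProbabilityMeasure μ]
    (p : ℝ) (hp1 : 1 < p) (hp2 : p ≤ 2) (X : ℕ → Ω → ℝ) (n : ℕ)
    (hmeas : ∀ k < n, Measurable (X k))
    (hint : ∀ k < n, Integrable (fun ω => |X k ω| ^ p) μ)
    (hcond : ∀ k < n,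
      μ[X k | ⨆ i ∈ Finset.range k, MeasurableSpace.comap (X i) inferInstance] =ᵐ[μ] 0) :
    Integrable (fun ω => |∑ k ∈ Finset.range n, X k ω| ^ p) μ ∧
    ∫ ω, |∑ k ∈ Finset.range n, X k ω| ^ p ∂μ
      ≤ 2 ^ (2-p) * ∑ k ∈ Finset.range n, ∫ ω, |X k ω| ^ p ∂μ := by
  induction n with
  | zero =>
      simp [Real.zero_rpow (by positivity : p ≠ 0)]
  | succ n IH =>
      obtain ⟨ihInt, ihLe⟩ := IH (fun k hk => hmeas k (by omega))
        (fun k hk => hint k (by omega)) (fun k hk => hcond k (by omega))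
      set S : Ω → ℝ := fun ω => ∑ k ∈ Finset.range n, X k ω with hS
      have hSmeas : Measurable S := by
        apply Finset.measurable_sum
        intro k hk; exact hmeas k (by simp at hk; omega)
      have hxmeas : Measurable (X n) := hmeas n (by omega)
      have hxint : Integrable (fun ω => |X n ω| ^ p) μ := hint n (by omega)
      -- the sigma algebra
      have hcondn : μ[X n | vbG X n] =ᵐ[μ] 0 := hcond n (by omega)
      have hm : vbG X n ≤ m0 := by
        rw [vbG]
        apply iSup₂_le
        intro i hi
        exact measurable_iff_comap_le.mp (hmeas i (by simp at hi; omega))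
      have hSG : Measurable[vbG X n] S := by
        apply Finset.measurable_sum
        intro k hk
        apply measurable_iff_comap_le.mpr
        rw [vbG]
        exact le_iSup₂ (f := fun i (_ : i ∈ Finset.range n) =>
          MeasurableSpace.comap (X i) inferInstance) k hk
      -- g
      set g : Ω → ℝ := fun ω => Real.sign (S ω) * |S ω| ^ (p-1) with hg
      have hphi : Measurable (fun t : ℝ => t * |t| ^ (p-1-1)) :=
        measurable_id.mul (measurable_id.abs.pow_const _)
      have hgeq : g = fun ω => (fun t : ℝ => t * |t| ^ (p-1-1)) (S ω) := by
        funext ω; exact vb_sp_eq (by linarith) (S ω)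
      have hgG : Measurable[vbG X n] g := by rw [hgeq]; exact hphi.comp hSG
      have hgmeas : Measurable[m0] g := by rw [hgeq]; exact hphi.comp hSmeas
      have hgabs : ∀ ω, |g ω| ≤ |S ω| ^ (p-1) := by
        intro ω
        rw [hg]
        rw [abs_mul, abs_of_nonneg (Real.rpow_nonneg (abs_nonneg _) _)]
        have : |Real.sign (S ω)| ≤ 1 := by
          rcases Real.sign_apply_eq (S ω) with h | h | h <;> rw [h] <;> norm_num
        nlinarith [Real.rpow_nonneg (abs_nonneg (S ω)) (p-1)]
      -- integrability of g * X n
      have hgx_int : Integrable (g * X n) μ := by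
        have hgxm : AEStronglyMeasurable (g * X n) μ := by
          exact (hgmeas.mul hxmeas).aestronglyMeasurable
        apply Integrable.mono' (ihInt.add hxint) hgxm
        filter_upwards with ω
        calc ‖g ω * X n ω‖ = |g ω| * |X n ω| := abs_mul _ _
          _ ≤ |S ω| ^ (p-1) * |X n ω| :=
              mul_le_mul_of_nonneg_right (hgabs ω) (abs_nonneg _)
          _ ≤ |S ω| ^ p + |X n ω| ^ p := vb_young hp1 _ _
      have hx_int : Integrable (X n) μ := by
        apply Integrable.mono' ((integrable_const (1:ℝ)).add hxint)
          hxmeas.aestronglyMeasurable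
        filter_upwards with ω
        exact vb_abs_le hp1 (X n ω)
      -- the middle integral vanishes
      haveI : IsFiniteMeasure (μ.trim hm) := by exact isFiniteMeasure_trim hm
      have hmid : ∫ ω, g ω * X n ω ∂μ = 0 := by
        have h1 : μ[g * X n | vbG X n] =ᵐ[μ] g * μ[X n | vbG X n] :=
          condExp_mul_of_stronglyMeasurable_left hgG.stronglyMeasurable hgx_int hx_int
        have h2 : g * μ[X n | vbG X n] =ᵐ[μ] 0 := by
          have h2' : g * μ[X n | vbG X n] =ᵐ[μ] g * 0 :=
            Filter.EventuallyEq.mul Filter.EventuallyEq.rfl hcondn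
          rw [mul_zero] at h2'
          exact h2'
        have h3 : ∫ ω, (g * X n) ω ∂μ = ∫ ω, (μ[g * X n | vbG X n]) ω ∂μ :=
          (integral_condExp (m₀ := m0) hm).symm
        calc ∫ ω, g ω * X n ω ∂μ = ∫ ω, (μ[g * X n | vbG X n]) ω ∂μ := by exact h3
          _ = ∫ ω, (0:Ω → ℝ) ω ∂μ := integral_congr_ae (h1.trans h2)
          _ = 0 := integral_zero _ _
      -- pointwise bound and integrability of the new sum
      have hsum_eq : ∀ ω, ∑ k ∈ Finset.range (n+1), X k ω = S ω + X n ω := by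
        intro ω; rw [Finset.sum_range_succ]
      have hnewInt : Integrable (fun ω => |∑ k ∈ Finset.range (n+1), X k ω| ^ p) μ := by
        apply Integrable.mono' (((ihInt.add hxint).const_mul (2 ^ p)))
          (((Finset.measurable_sum _ (fun k hk => hmeas k (by simp at hk; omega))).abs.pow_const
            _).aestronglyMeasurable)
        filter_upwards with ω
        show ‖|∑ k ∈ Finset.range (n+1), X k ω| ^ p‖ ≤ 2 ^ p * (|S ω| ^ p + |X n ω| ^ p)
        rw [Real.norm_of_nonneg (Real.rpow_nonneg (abs_nonneg _) _), hsum_eq ω]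
        exact vb_crude hp1 (S ω) (X n ω)
      refine ⟨hnewInt, ?_⟩
      -- integral inequality
      have hgx_int' : Integrable (fun ω => p * (g ω * X n ω)) μ := by
        exact hgx_int.const_mul p
      have hSp_int : Integrable (fun ω => |S ω| ^ p) μ := ihInt
      have hxp_int : Integrable (fun ω => 2 ^ (2-p) * |X n ω| ^ p) μ := by
        exact hxint.const_mul _
      have hRHSint : Integrable (fun ω => |S ω| ^ p + p * (g ω * X n ω)
          + 2 ^ (2-p) * |X n ω| ^ p) μ := by
        have hAB : Integrable (fun ω => |S ω| ^ p + p * (g ω * X n ω)) μ := by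
          exact hSp_int.add hgx_int'
        exact hAB.add hxp_int
      have hle : ∫ ω, |∑ k ∈ Finset.range (n+1), X k ω| ^ p ∂μ
          ≤ ∫ ω, (|S ω| ^ p + p * (g ω * X n ω) + 2 ^ (2-p) * |X n ω| ^ p) ∂μ := by
        apply integral_mono hnewInt hRHSint
        intro ω
        show |∑ k ∈ Finset.range (n+1), X k ω| ^ p
          ≤ |S ω| ^ p + p * (g ω * X n ω) + 2 ^ (2-p) * |X n ω| ^ p
        rw [hsum_eq ω]
        have := vb_pointwise hp1 hp2 (S ω) (X n ω)
        simp only [hg]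
        calc |S ω + X n ω| ^ p
            ≤ |S ω| ^ p + p * (Real.sign (S ω) * |S ω| ^ (p-1)) * X n ω
              + 2 ^ (2-p) * |X n ω| ^ p := this
          _ = |S ω| ^ p + p * (Real.sign (S ω) * |S ω| ^ (p-1) * X n ω)
              + 2 ^ (2-p) * |X n ω| ^ p := by ring
      have hval : ∫ ω, (|S ω| ^ p + p * (g ω * X n ω) + 2 ^ (2-p) * |X n ω| ^ p) ∂μ
          = ∫ ω, |S ω| ^ p ∂μ + 2 ^ (2-p) * ∫ ω, |X n ω| ^ p ∂μ := by
        have hAB : Integrable (fun ω => |S ω| ^ p + p * (g ω * X n ω)) μ := by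
          exact hSp_int.add hgx_int'
        rw [integral_add hAB hxp_int, integral_add hSp_int hgx_int',
          integral_const_mul, integral_const_mul, hmid]
        ring
      rw [hval] at hle
      rw [Finset.sum_range_succ, mul_add]
      calc ∫ ω, |∑ k ∈ Finset.range (n+1), X k ω| ^ p ∂μ
          ≤ ∫ ω, |S ω| ^ p ∂μ + 2 ^ (2-p) * ∫ ω, |X n ω| ^ p ∂μ := hle
        _ ≤ 2 ^ (2-p) * ∑ k ∈ Finset.range n, ∫ ω, |X k ω| ^ p ∂μ
            + 2 ^ (2-p) * ∫ ω, |X n ω| ^ p ∂μ := by linarith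

lemma vb_nn {p : ℝ} (hp0 : 0 ≤ p) (x : ℝ) :
    ENNReal.ofReal (|x| ^ p) = (‖x‖₊ : ℝ≥0∞) ^ p := by
  rw [← ENNReal.ofReal_rpow_of_nonneg (abs_nonneg x) hp0, ← Real.enorm_eq_ofReal_abs, enorm_eq_nnnorm]

/-- Scalar Burkholder-type inequality for martingale difference sequences. -/
theorem scalar_burkholder
    {Ω : Type*} [m0 : MeasurableSpace Ω] (μ : Measure Ω) [IsProbabilityMeasure μ]
    (p : ℝ) (hp1 : 1 < p) (hp2 : p ≤ 2)
    (T : ℕ) (X : ℕ → Ω → ℝ)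
    (hmeas : ∀ k < T, Measurable (X k))
    (hmom : ∀ k < T, ∫⁻ ω, (‖X k ω‖₊ : ℝ≥0∞) ^ p ∂μ < ⊤)
    (hcond : ∀ k < T,
      μ[X k | ⨆ i ∈ Finset.range k, MeasurableSpace.comap (X i) inferInstance]
        =ᵐ[μ] 0) :
    ∫⁻ ω, (‖∑ k ∈ Finset.range T, X k ω‖₊ : ℝ≥0∞) ^ p ∂μ
      ≤ ENNReal.ofReal ((2 : ℝ) ^ (2 - p)) *
        ∑ k ∈ Finset.range T, ∫⁻ ω, (‖X k ω‖₊ : ℝ≥0∞) ^ p ∂μ := by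
  have hp0 : (0:ℝ) ≤ p := by linarith
  have hint : ∀ k < T, Integrable (fun ω => |X k ω| ^ p) μ := by
    intro k hk
    refine ⟨((hmeas k hk).abs.pow_const p).aestronglyMeasurable, ?_⟩
    show ∫⁻ ω, (‖(|X k ω| ^ p)‖₊ : ℝ≥0∞) ∂μ < ⊤
    have : (fun ω => (‖(|X k ω| ^ p)‖₊ : ℝ≥0∞)) = fun ω => (‖X k ω‖₊ : ℝ≥0∞) ^ p := by
      funext ω
      rw [← vb_nn hp0, ← enorm_eq_nnnorm, Real.enorm_eq_ofReal (Real.rpow_nonneg (abs_nonneg _) p)]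
    rw [this]
    exact hmom k hk
  obtain ⟨hSint, hle⟩ := vb_main μ p hp1 hp2 X T hmeas hint hcond
  have step1 : ∫⁻ ω, (‖∑ k ∈ Finset.range T, X k ω‖₊ : ℝ≥0∞) ^ p ∂μ
      = ENNReal.ofReal (∫ ω, |∑ k ∈ Finset.range T, X k ω| ^ p ∂μ) := by
    rw [ofReal_integral_eq_lintegral_ofReal hSint
      (Filter.Eventually.of_forall fun ω => Real.rpow_nonneg (abs_nonneg _) p)]
    apply lintegral_congr
    intro ω
    rw [vb_nn hp0]
  have step3 : ∀ k, k ∈ Finset.range T →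
      ENNReal.ofReal (∫ ω, |X k ω| ^ p ∂μ) = ∫⁻ ω, (‖X k ω‖₊ : ℝ≥0∞) ^ p ∂μ := by
    intro k hk
    rw [ofReal_integral_eq_lintegral_ofReal (hint k (Finset.mem_range.mp hk))
      (Filter.Eventually.of_forall fun ω => Real.rpow_nonneg (abs_nonneg _) p)]
    apply lintegral_congr
    intro ω
    rw [vb_nn hp0]
  calc ∫⁻ ω, (‖∑ k ∈ Finset.range T, X k ω‖₊ : ℝ≥0∞) ^ p ∂μ
      = ENNReal.ofReal (∫ ω, |∑ k ∈ Finset.range T, X k ω| ^ p ∂μ) := step1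
    _ ≤ ENNReal.ofReal (2 ^ (2-p) * ∑ k ∈ Finset.range T, ∫ ω, |X k ω| ^ p ∂μ) :=
        ENNReal.ofReal_le_ofReal hle
    _ = ENNReal.ofReal ((2:ℝ) ^ (2-p)) *
        ENNReal.ofReal (∑ k ∈ Finset.range T, ∫ ω, |X k ω| ^ p ∂μ) :=
        ENNReal.ofReal_mul (by positivity)
    _ = ENNReal.ofReal ((2:ℝ) ^ (2-p)) *
        ∑ k ∈ Finset.range T, ENNReal.ofReal (∫ ω, |X k ω| ^ p ∂μ) := by
        rw [ENNReal.ofReal_sum_of_nonneg]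
        intro k hk
        exact integral_nonneg fun ω => Real.rpow_nonneg (abs_nonneg _) p
    _ = ENNReal.ofReal ((2:ℝ) ^ (2-p)) *
        ∑ k ∈ Finset.range T, ∫⁻ ω, (‖X k ω‖₊ : ℝ≥0∞) ^ p ∂μ := by
        rw [Finset.sum_congr rfl step3]
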